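/- Every element w of W^p (type D_n modulo type A_{n-1} parabolic) is Deodhar: for any reduced expression w = s_{i_1}···s_{i_k}, the parabolic Kazhdan-Lusztig basis element satisfies N̄_w = N̄_e C_{s_{i_1}} ··· C_{s_{i_k}}, where C_s = H_s + q. -/

import Mathlib

namespace TypeD

attribute [local instance] Classical.propDecidable

/-- A `{+,-}`-sequence of length `n`; `true` encodes a minus sign. -/
abbrev Seq (n : ℕ) := Fin n → Bool

/-- The sequence has an even number of minus signs. -/
def EvenMinus {n : ℕ} (α : Seq n) : Prop :=
  Even ({i : Fin n | α i = true}.ncard)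

/-- The extended diagrammatical weight of a sequence, as labels on `4n` points
(indices `0,…,4n-1` correspond to the points `-2n,…,-1,1,…,2n`):
`n` frozen pluses on the left, then the antisymmetric extension of `α`,
then `n` frozen minuses on the right.  `true` = minus = `∧`, `false` = plus = `∨`. -/
def extLab {n : ℕ} (α : Seq n) (i : Fin (4 * n)) : Bool :=
  if _h1 : i.val < n then false
  else if _h2 : i.val < 2 * n then !α ⟨2 * n - 1 - i.val, by omega⟩
  else if _h3 : i.val < 3 * n then α ⟨i.val - 2 * n, by omega⟩
  else true

/-- A perfect matching of `m` points on a line by non-crossing arcs drawn in the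
lower half plane, encoded as a fixed-point free involution. -/
structure IsMatching {m : ℕ} (f : Fin m → Fin m) : Prop where
  invol : ∀ i, f (f i) = i
  nofix : ∀ i, f i ≠ i
  noncross : ∀ a b : Fin m, a < f a → b < f b → a < b → b < f a → f b < f a

/-- The non-crossing matching of the `4n` extended points of `α` in which every arc
joins a plus to a minus lying to its right. -/
def IsNC {n : ℕ} (α : Seq n) (f : Fin (4 * n) → Fin (4 * n)) : Prop :=
  IsMatching f ∧ ∀ i, i < f i → extLab α i = false ∧ extLab α (f i) = true

/-- The arc of `f` starting at `i` crosses the middle of the diagram. -/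
def Cross {n : ℕ} (f : Fin (4 * n) → Fin (4 * n)) (i : Fin (4 * n)) : Prop :=
  i.val < 2 * n ∧ 2 * n ≤ (f i).val

/-- The rank of a middle-crossing arc (with left endpoint `a`), counting from the
innermost one (which has rank `1`). -/
noncomputable def rank {n : ℕ} (f : Fin (4 * n) → Fin (4 * n)) (a : Fin (4 * n)) : ℕ :=
  {b : Fin (4 * n) | Cross f b ∧ a ≤ b}.ncard

/-- The cup diagram `C(w)` of a sequence: the non-crossing matching `f` of the
extended weight, where the middle-crossing arcs, taken from innermost outwards in
consecutive pairs, have two of their boundary points exchanged (the resulting pairs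
of arcs being `linked`, i.e. decorated). `g` is the resulting pairing of endpoints. -/
structure CupDiagram (n : ℕ) (α : Seq n) where
  f : Fin (4 * n) → Fin (4 * n)
  g : Fin (4 * n) → Fin (4 * n)
  matching : IsNC α f
  agree : ∀ i, ¬ Cross f i → ¬ Cross f (f i) → g i = f i
  link : ∀ a b, Cross f a → Cross f b → Odd (rank f a) → rank f b = rank f a + 1 →
    g a = f b ∧ g b = f a ∧ g (f b) = a ∧ g (f a) = b

/-- `g` is (the pairing underlying) the cup diagram of `α`. -/
def IsCupDiagram {n : ℕ} (α : Seq n) (g : Fin (4 * n) → Fin (4 * n)) : Prop :=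
  ∃ D : CupDiagram n α, D.g = g

/-- The arcs of the cup diagram starting at `a` and at `b` form a linked
(decorated) pair. -/
def CupDiagram.Linked {n : ℕ} {α : Seq n} (D : CupDiagram n α) (a b : Fin (4 * n)) : Prop :=
  Cross D.f a ∧ Cross D.f b ∧ Odd (rank D.f a) ∧ rank D.f b = rank D.f a + 1

/-- The weight `v` orients the (cup or cap) diagram `g`: every arc carries exactly one
`∧` and one `∨`. -/
def Orients {n : ℕ} (v : Seq n) (g : Fin (4 * n) → Fin (4 * n)) : Prop :=
  ∀ i, extLab v (g i) ≠ extLab v i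

/-- The number of clockwise oriented cups (cups with `∧` at their left endpoint). -/
noncomputable def clCount {n : ℕ} (v : Seq n) (g : Fin (4 * n) → Fin (4 * n)) : ℕ :=
  {i : Fin (4 * n) | i < g i ∧ extLab v i = true}.ncard

/-- The mirror (reflection through the middle vertical axis) of a point. -/
def mirror {n : ℕ} (i : Fin (4 * n)) : Fin (4 * n) :=
  ⟨4 * n - 1 - i.val, by have := i.isLt; omega⟩


open LaurentPolynomial

/-- The ground ring `L = ℤ[q,q⁻¹]`. -/
abbrev L := LaurentPolynomial ℤ

/-- The variable `q`. -/
noncomputable def q : L := T 1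

/-- The inverse variable `q⁻¹`. -/
noncomputable def qinv : L := T (-1)

/-- `W^p`, identified with `{+,-}`-sequences of length `n` with an even number of
minuses. -/
abbrev Wp (n : ℕ) := {α : Seq n // EvenMinus α}

/-- The parabolic Hecke module `N`, free over `L` on the standard basis `N_w`,
`w ∈ W^p`. -/
abbrev NMod (n : ℕ) := Wp n →₀ L

/-- The element `1` of `Fin n` (junk if `n = 1`). -/
def idx1 {n : ℕ} (j : Fin n) : Fin n := ⟨1 % n, Nat.mod_lt 1 j.pos⟩

/-- The right action of the simple reflection `s_j` on sequences: for `j ≥ 1` it swaps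
the entries at the (0-indexed) places `j-1` and `j`; `s_0` maps `(α₁, α₂, …)` to
`(-α₂, -α₁, …)`. -/
def sAct {n : ℕ} (j : Fin n) (α : Seq n) : Seq n :=
  if j.val = 0 then
    fun k => if k.val = 0 then !α (idx1 j) else if k.val = 1 then !α ⟨0, j.pos⟩ else α k
  else
    fun k =>
      if k.val = j.val - 1 then α j
      else if k.val = j.val then α ⟨j.val - 1, by have := j.isLt; omega⟩
      else α k

/-- Right multiplication by `s_j` yields a longer element of `W^p`:
for `j ≥ 1` the entries at places `j-1`, `j` read `-+`; for `j = 0` the first two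
entries read `++`. -/
def upMove {n : ℕ} (j : Fin n) (α : Seq n) : Prop :=
  if j.val = 0 then α ⟨0, j.pos⟩ = false ∧ α (idx1 j) = false
  else α ⟨j.val - 1, by have := j.isLt; omega⟩ = true ∧ α j = false

/-- Right multiplication by `s_j` yields a shorter element of `W^p`. -/
def downMove {n : ℕ} (j : Fin n) (α : Seq n) : Prop :=
  if j.val = 0 then α ⟨0, j.pos⟩ = true ∧ α (idx1 j) = true
  else α ⟨j.val - 1, by have := j.isLt; omega⟩ = false ∧ α j = true

/-- The action of the Kazhdan–Lusztig generator `C_{s_j} = H_{s_j} + q` on the parabolic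
Hecke module `N` in the standard basis:
`N_w C_s = N_{ws} + q N_w` if `ws ∈ W^p` is longer, `N_w C_s = N_{ws} + q⁻¹ N_w` if
`ws ∈ W^p` is shorter, and `N_w C_s = 0` if `ws ∉ W^p`. -/
noncomputable def Cact {n : ℕ} (j : Fin n) (x : NMod n) : NMod n :=
  x.sum fun w c =>
    if upMove j w.1 then
      (if he : EvenMinus (sAct j w.1) then
        c • (Finsupp.single (⟨sAct j w.1, he⟩ : Wp n) (1 : L) + Finsupp.single w q) else 0)
    else if downMove j w.1 then
      (if he : EvenMinus (sAct j w.1) then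
        c • (Finsupp.single (⟨sAct j w.1, he⟩ : Wp n) (1 : L) + Finsupp.single w qinv) else 0)
    else 0

/-- The identity coset `e ∈ W^p`, i.e. the all-plus sequence. -/
def eW (n : ℕ) : Wp n :=
  ⟨fun _ => false, by
    have h : {i : Fin n | (fun _ : Fin n => false) i = true} = (∅ : Set (Fin n)) := by
      ext i; simp
    unfold EvenMinus
    rw [h]
    simp⟩

/-- `UpChain l α β` : applying the simple reflections of `l` successively on the right
of `α` gives a chain of length-increasing moves ending in `β`.  Such words are exactly
the reduced expressions relevant for `W^p`. -/
def UpChain {n : ℕ} : List (Fin n) → Seq n → Seq n → Prop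
  | [], α, β => α = β
  | j :: l, α, β => upMove j α ∧ UpChain l (sAct j α) β

set_option linter.dupNamespace false
set_option maxHeartbeats 1000000

variable {n : ℕ}

abbrev Cup (n : ℕ) := Fin n × Fin n × Bool

/-- Negate a sign sequence at (up to) two positions. -/
def flip2 (a b : Fin n) (v : Seq n) : Seq n :=
  fun p => if p = a ∨ p = b then !v p else v p

def flipc (c : Cup n) (v : Seq n) : Seq n := flip2 c.1 c.2.1 v

lemma flip2_apply_left (a b : Fin n) (v : Seq n) : flip2 a b v a = !v a := by
  simp [flip2]

lemma flip2_apply_right (a b : Fin n) (v : Seq n) : flip2 a b v b = !v b := by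
  simp [flip2]

lemma flip2_apply_other {a b p : Fin n} (v : Seq n) (h1 : p ≠ a) (h2 : p ≠ b) :
    flip2 a b v p = v p := by
  simp [flip2, h1, h2]

lemma flip2_comm (a b : Fin n) (v : Seq n) : flip2 a b v = flip2 b a v := by
  funext p; simp [flip2, or_comm]

lemma flip2_flip2 (a b x y : Fin n) (v : Seq n) :
    flip2 a b (flip2 x y v) = flip2 x y (flip2 a b v) := by
  funext p; simp only [flip2]; split <;> split <;> rfl

lemma flip2_invol (a b : Fin n) (v : Seq n) : flip2 a b (flip2 a b v) = v := by
  funext p; simp only [flip2]; split <;> simp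

/-- The two special flip compositions appearing in the two-cup core lemma. -/
lemma flip_calc1 {a b p k : Fin n} (v : Seq n)
    (hpa : p ≠ a) (hpb : p ≠ b) (hpk : p ≠ k) (hka : k ≠ a) (hkb : k ≠ b) (hab : a ≠ b) :
    flip2 a b (flip2 b k (flip2 p a v)) = flip2 p k v := by
  funext x
  simp only [flip2]
  by_cases h1 : x = a <;> by_cases h2 : x = b <;> by_cases h3 : x = p <;> by_cases h4 : x = k <;>
    simp_all

lemma flip_calc2 {a b p k : Fin n} (v : Seq n)
    (hpa : p ≠ a) (hpb : p ≠ b) (hpk : p ≠ k) (hka : k ≠ a) (hkb : k ≠ b) (hab : a ≠ b) :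
    flip2 b k (flip2 p a v) = flip2 p k (flip2 a b v) := by
  funext x
  simp only [flip2]
  by_cases h1 : x = a <;> by_cases h2 : x = b <;> by_cases h3 : x = p <;> by_cases h4 : x = k <;>
    simp_all

/-- Count of minus signs. -/
def mc (α : Seq n) : ℕ := (Finset.univ.filter (fun i => α i = true)).card

lemma evenMinus_iff (α : Seq n) : EvenMinus α ↔ Even (mc α) := by
  unfold EvenMinus mc
  rw [Set.ncard_eq_toFinset_card', Set.toFinset_setOf]

lemma mc_flip2 {a b : Fin n} (hab : a ≠ b) (v : Seq n) :
    EvenMinus (flip2 a b v) ↔ EvenMinus v := by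
  rw [evenMinus_iff, evenMinus_iff]
  unfold mc
  have key : ∀ w : Seq n, (Finset.univ.filter (fun i => w i = true)).card
      = (if w a then 1 else 0) + (if w b then 1 else 0)
        + ((Finset.univ \ {a, b}).filter (fun i => w i = true)).card := by
    intro w
    have hsplit : (Finset.univ : Finset (Fin n)) = {a, b} ∪ (Finset.univ \ {a, b}) := by
      rw [Finset.union_sdiff_of_subset (Finset.subset_univ _)]
    have h2 : Finset.univ.filter (fun i => w i = true)
        = ({a, b} : Finset (Fin n)).filter (fun i => w i = true)
          ∪ (Finset.univ \ {a, b}).filter (fun i => w i = true) := by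
      rw [← Finset.filter_union]
      congr 1
    rw [h2, Finset.card_union_of_disjoint
      (Finset.disjoint_filter_filter (Finset.disjoint_sdiff)), Finset.filter_insert,
      Finset.filter_singleton]
    congr 1
    split <;> split <;> simp [Finset.card_insert_of_notMem, hab]
  rw [key, key]
  have hrest : ((Finset.univ \ {a, b}).filter (fun i => flip2 a b v i = true)).card
      = ((Finset.univ \ {a, b}).filter (fun i => v i = true)).card := by
    apply Finset.card_bij (fun x _ => x) ?_ (fun _ _ _ _ h => h) ?_
    · intro x hx
      simp only [Finset.mem_filter, Finset.mem_sdiff, Finset.mem_insert,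
        Finset.mem_singleton] at hx ⊢
      refine ⟨hx.1, ?_⟩
      rw [← hx.2, flip2_apply_other v (by tauto) (by tauto)]
    · intro x hx
      simp only [Finset.mem_filter, Finset.mem_sdiff, Finset.mem_insert,
        Finset.mem_singleton] at hx
      refine ⟨x, ?_, rfl⟩
      simp only [Finset.mem_filter, Finset.mem_sdiff, Finset.mem_insert, Finset.mem_singleton]
      refine ⟨hx.1, ?_⟩
      rw [flip2_apply_other v (by tauto) (by tauto), hx.2]
  rw [hrest, flip2_apply_left, flip2_apply_right]
  rcases hva : v a <;> rcases hvb : v b <;> simp [Nat.even_iff] <;> omega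

/-! ### Move positions and basic facts about `sAct`, `upMove`, `downMove` -/

def aIdx (j : Fin n) : Fin n := if j.val = 0 then ⟨0, j.pos⟩ else ⟨j.val - 1, by have := j.isLt; omega⟩
def bIdx (j : Fin n) : Fin n := if j.val = 0 then idx1 j else j
/-- The expected sign at `aIdx j` for an up move. -/
def mark (j : Fin n) : Bool := decide (j.val ≠ 0)

lemma aIdx_val (j : Fin n) : (aIdx j).val = if j.val = 0 then 0 else j.val - 1 := by
  unfold aIdx; split <;> rfl

lemma bIdx_val (hn : 2 ≤ n) (j : Fin n) : (bIdx j).val = if j.val = 0 then 1 else j.val := by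
  unfold bIdx idx1; split <;> simp [Nat.mod_eq_of_lt (by omega : 1 < n)]

lemma aIdx_ne_bIdx (hn : 2 ≤ n) (j : Fin n) : aIdx j ≠ bIdx j := by
  have h1 := aIdx_val j; have h2 := bIdx_val hn j
  intro h; rw [Fin.ext_iff] at h
  by_cases h0 : j.val = 0 <;> simp [h0] at h1 h2 <;> omega

lemma upMove_iff (hn : 2 ≤ n) (j : Fin n) (v : Seq n) :
    upMove j v ↔ (v (aIdx j) = mark j ∧ v (bIdx j) = false) := by
  unfold upMove aIdx bIdx mark
  by_cases h0 : j.val = 0 <;> simp [h0]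

lemma downMove_iff (hn : 2 ≤ n) (j : Fin n) (v : Seq n) :
    downMove j v ↔ (v (aIdx j) = !mark j ∧ v (bIdx j) = true) := by
  unfold downMove aIdx bIdx mark
  by_cases h0 : j.val = 0 <;> simp [h0]

lemma sAct_eq_flip2 (hn : 2 ≤ n) (j : Fin n) (v : Seq n)
    (h : upMove j v ∨ downMove j v) : sAct j v = flip2 (aIdx j) (bIdx j) v := by
  have h1n : 1 % n = 1 := Nat.mod_eq_of_lt (by omega)
  funext p
  by_cases h0 : j.val = 0
  · have hvv : v ⟨0, j.pos⟩ = v (idx1 j) := by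
      unfold upMove downMove at h
      rcases h with h | h <;> simp only [h0, if_true] at h <;> rw [h.1, h.2]
    have hi1 : (idx1 j).val = 1 := by unfold idx1; simp [h1n]
    unfold sAct flip2 aIdx bIdx
    simp only [h0, if_true]
    by_cases hp0 : p.val = 0
    · have hp : p = ⟨0, j.pos⟩ := Fin.ext hp0
      rw [if_pos hp0, if_pos (Or.inl hp), hp, ← hvv]
    · by_cases hp1 : p.val = 1
      · have hp : p = idx1 j := Fin.ext (by rw [hp1, hi1])
        rw [if_neg hp0, if_pos hp1, if_pos (Or.inr hp), hp, hvv]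
      · rw [if_neg hp0, if_neg hp1, if_neg]
        rintro (hc | hc) <;> rw [hc] at hp0 hp1
        · exact hp0 rfl
        · exact hp1 hi1
  · have hj : 0 < j.val := Nat.pos_of_ne_zero h0
    have hvals : v ⟨j.val - 1, by have := j.isLt; omega⟩ = !v j := by
      unfold upMove downMove at h
      rcases h with h | h <;> simp only [h0, if_false] at h <;> rw [h.1, h.2] <;> rfl
    unfold sAct flip2 aIdx bIdx
    simp only [h0, if_false]
    by_cases hpa : p.val = j.val - 1
    · have hp : p = ⟨j.val - 1, by have := j.isLt; omega⟩ := Fin.ext hpa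
      rw [if_pos hpa, if_pos (Or.inl hp), hp, hvals, Bool.not_not]
    · by_cases hpb : p.val = j.val
      · have hp : p = j := Fin.ext hpb
        rw [if_neg hpa, if_pos hpb, if_pos (Or.inr hp), hp, ← hvals]
      · rw [if_neg hpa, if_neg hpb, if_neg]
        rintro (hc | hc) <;> rw [hc] at hpa hpb
        · exact hpa rfl
        · exact hpb rfl

/-! ### Algebraic properties of `Cact`; the auxiliary single `sing` -/

lemma Cact_zero (j : Fin n) : Cact j (0 : NMod n) = 0 := Finsupp.sum_zero_index

lemma Cact_single (j : Fin n) (w : Wp n) (c : L) :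
    Cact j (Finsupp.single w c) =
      if upMove j w.1 then
        (if he : EvenMinus (sAct j w.1) then
          c • (Finsupp.single (⟨sAct j w.1, he⟩ : Wp n) (1 : L) + Finsupp.single w q) else 0)
      else if downMove j w.1 then
        (if he : EvenMinus (sAct j w.1) then
          c • (Finsupp.single (⟨sAct j w.1, he⟩ : Wp n) (1 : L) + Finsupp.single w qinv) else 0)
      else 0 := by
  unfold Cact
  apply Finsupp.sum_single_index
  split
  · split <;> simp
  · split
    · split <;> simp
    · rfl

lemma Cact_add (j : Fin n) (x y : NMod n) : Cact j (x + y) = Cact j x + Cact j y := by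
  unfold Cact
  apply Finsupp.sum_add_index
  · intro w _
    split
    · split <;> simp
    · split
      · split <;> simp
      · rfl
  · intro w _ c1 c2
    split_ifs <;> first
      | rw [add_smul]
      | simp

lemma Cact_smul (j : Fin n) (r : L) (x : NMod n) : Cact j (r • x) = r • Cact j x := by
  unfold Cact
  rw [Finsupp.sum_smul_index (fun w => by split_ifs <;> simp)]
  rw [Finsupp.smul_sum]
  apply Finsupp.sum_congr
  intro w _
  split_ifs <;> simp [mul_smul]

/-- `single` made total over all sequences (zero on odd ones). -/
noncomputable def sing (v : Seq n) (c : L) : NMod n :=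
  if h : EvenMinus v then Finsupp.single ⟨v, h⟩ c else 0

lemma sing_smul (r : L) (v : Seq n) (c : L) : r • sing v c = sing v (r * c) := by
  unfold sing; split <;> simp [Finsupp.smul_single]

lemma q_mul_qinv : q * qinv = 1 := by
  unfold q qinv
  rw [← LaurentPolynomial.T_add]; norm_num

lemma Cact_sing_up (hn : 2 ≤ n) {j : Fin n} {v : Seq n} (hu : upMove j v) (c : L) :
    Cact j (sing v c) = sing (flip2 (aIdx j) (bIdx j) v) c + sing v (c * q) := by
  have hf : sAct j v = flip2 (aIdx j) (bIdx j) v := sAct_eq_flip2 hn j v (Or.inl hu)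
  unfold sing
  by_cases h : EvenMinus v
  · rw [dif_pos h, Cact_single, if_pos hu]
    have he : EvenMinus (sAct j v) := by
      rw [hf, mc_flip2 (aIdx_ne_bIdx hn j)]; exact h
    rw [dif_pos he]
    have he2 : EvenMinus (flip2 (aIdx j) (bIdx j) v) := hf ▸ he
    rw [dif_pos he2, dif_pos h, smul_add, Finsupp.smul_single, Finsupp.smul_single, smul_eq_mul,
      smul_eq_mul, mul_one]
    congr 2
    exact Subtype.ext hf
  · rw [dif_neg h, Cact_zero, dif_neg, dif_neg h, add_zero]
    rw [mc_flip2 (aIdx_ne_bIdx hn j)]; exact h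

lemma Cact_sing_down (hn : 2 ≤ n) {j : Fin n} {v : Seq n} (hd : downMove j v) (c : L) :
    Cact j (sing v c) = sing (flip2 (aIdx j) (bIdx j) v) c + sing v (c * qinv) := by
  have hf : sAct j v = flip2 (aIdx j) (bIdx j) v := sAct_eq_flip2 hn j v (Or.inr hd)
  have hnu : ¬ upMove j v := by
    rw [upMove_iff hn, downMove_iff hn] at *
    rw [hd.1, hd.2]; simp
  unfold sing
  by_cases h : EvenMinus v
  · rw [dif_pos h, Cact_single, if_neg hnu, if_pos hd]
    have he : EvenMinus (sAct j v) := by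
      rw [hf, mc_flip2 (aIdx_ne_bIdx hn j)]; exact h
    rw [dif_pos he]
    have he2 : EvenMinus (flip2 (aIdx j) (bIdx j) v) := hf ▸ he
    rw [dif_pos he2, dif_pos h, smul_add, Finsupp.smul_single, Finsupp.smul_single, smul_eq_mul,
      smul_eq_mul, mul_one]
    congr 2
    exact Subtype.ext hf
  · rw [dif_neg h, Cact_zero, dif_neg, dif_neg h, add_zero]
    rw [mc_flip2 (aIdx_ne_bIdx hn j)]; exact h

lemma Cact_sing_none {j : Fin n} {v : Seq n} (h1 : ¬ upMove j v) (h2 : ¬ downMove j v) (c : L) :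
    Cact j (sing v c) = 0 := by
  unfold sing
  by_cases h : EvenMinus v
  · rw [dif_pos h, Cact_single, if_neg h1, if_neg h2]
  · rw [dif_neg h, Cact_zero]

/-! ### The monomial sums `poly` attached to a list of cups -/

noncomputable def poly (v : Seq n) : List (Cup n) → NMod n
  | [] => sing v 1
  | c :: P => poly v P + q • poly (flipc c v) P

lemma poly_cons (v : Seq n) (c : Cup n) (P : List (Cup n)) :
    poly v (c :: P) = poly v P + q • poly (flipc c v) P := rfl

lemma poly_perm (v : Seq n) {P P' : List (Cup n)} (h : P.Perm P') : poly v P = poly v P' := by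
  induction h generalizing v with
  | nil => rfl
  | cons c _ ih => rw [poly_cons, poly_cons, ih, ih]
  | swap c d P =>
      simp only [poly_cons, smul_add]
      rw [show flipc c (flipc d v) = flipc d (flipc c v) from flip2_flip2 _ _ _ _ v]
      abel
  | trans _ _ ih1 ih2 => rw [ih1, ih2]

lemma poly_congr_cup (v : Seq n) {c c' : Cup n} (P : List (Cup n))
    (h : flipc c v = flipc c' v) : poly v (c :: P) = poly v (c' :: P) := by
  rw [poly_cons, poly_cons, h]

/-! ### The three core local computations -/

lemma core0 (hn : 2 ≤ n) {j : Fin n} {γ : Seq n} (hu : upMove j γ) (e : Bool) :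
    Cact j (poly γ []) = poly (flip2 (aIdx j) (bIdx j) γ) [(aIdx j, bIdx j, e)] := by
  show Cact j (sing γ 1) = poly _ [(aIdx j, bIdx j, e)]
  rw [Cact_sing_up hn hu, poly_cons]
  show _ = sing _ 1 + q • sing (flipc _ _) 1
  rw [sing_smul, one_mul, mul_one]
  congr 1
  unfold flipc
  rw [flip2_invol]

/-- Toggling exactly one of the two positions of an up-configuration kills the move. -/
lemma toggle_none (hn : 2 ≤ n) {j : Fin n} {γ δ : Seq n} (hu : upMove j γ)
    (h : (δ (aIdx j) = !γ (aIdx j) ∧ δ (bIdx j) = γ (bIdx j)) ∨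
         (δ (aIdx j) = γ (aIdx j) ∧ δ (bIdx j) = !γ (bIdx j))) :
    ¬ upMove j δ ∧ ¬ downMove j δ := by
  rw [upMove_iff hn] at hu ⊢
  rw [downMove_iff hn]
  rcases h with ⟨h1, h2⟩ | ⟨h1, h2⟩ <;> rw [h1, h2, hu.1, hu.2] <;> cases mark j <;> simp

lemma toggle_down (hn : 2 ≤ n) {j : Fin n} {γ δ : Seq n} (hu : upMove j γ)
    (h1 : δ (aIdx j) = !γ (aIdx j)) (h2 : δ (bIdx j) = !γ (bIdx j)) :
    downMove j δ := by
  rw [upMove_iff hn] at hu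
  rw [downMove_iff hn, h1, h2, hu.1, hu.2]
  simp

lemma core1 (hn : 2 ≤ n) {j : Fin n} {γ : Seq n} (hu : upMove j γ) (c : Cup n)
    (hc : ((c.1 = aIdx j ∨ c.2.1 = aIdx j) ∧ c.1 ≠ bIdx j ∧ c.2.1 ≠ bIdx j) ∨
          ((c.1 = bIdx j ∨ c.2.1 = bIdx j) ∧ c.1 ≠ aIdx j ∧ c.2.1 ≠ aIdx j)) (e : Bool) :
    Cact j (poly γ [c]) = poly (flip2 (aIdx j) (bIdx j) γ) [(aIdx j, bIdx j, e)] := by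
  have hno : ¬ upMove j (flipc c γ) ∧ ¬ downMove j (flipc c γ) := by
    apply toggle_none hn hu
    unfold flipc flip2
    rcases hc with ⟨h1, h2, h3⟩ | ⟨h1, h2, h3⟩
    · left
      constructor
      · rw [if_pos]; tauto
      · rw [if_neg]; push_neg; exact ⟨fun h => h2 h.symm, fun h => h3 h.symm⟩
    · right
      constructor
      · rw [if_neg]; push_neg; exact ⟨fun h => h2 h.symm, fun h => h3 h.symm⟩
      · rw [if_pos]; tauto
  rw [poly_cons]
  show Cact j (sing γ 1 + q • sing (flipc c γ) 1) = _
  rw [Cact_add, Cact_smul, Cact_sing_up hn hu, Cact_sing_none hno.1 hno.2, smul_zero, add_zero,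
    poly_cons]
  show _ = sing _ 1 + q • sing (flipc _ _) 1
  rw [sing_smul, one_mul, mul_one]
  congr 1
  unfold flipc
  rw [flip2_invol]

lemma poly_nil (v : Seq n) : poly v [] = sing v 1 := rfl

lemma core2 (hn : 2 ≤ n) {j : Fin n} {γ : Seq n} (hu : upMove j γ) (p k : Fin n)
    (e1 e2 e3 e4 : Bool)
    (hpa : p ≠ aIdx j) (hpb : p ≠ bIdx j) (hpk : p ≠ k) (hka : k ≠ aIdx j) (hkb : k ≠ bIdx j) :
    Cact j (poly γ [(p, aIdx j, e1), (bIdx j, k, e2)]) =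
      poly (flip2 (aIdx j) (bIdx j) γ) [(aIdx j, bIdx j, e3), (p, k, e4)] := by
  have hab := aIdx_ne_bIdx hn j
  set a := aIdx j with ha
  set b := bIdx j with hb
  have hno1 : ¬ upMove j (flip2 b k γ) ∧ ¬ downMove j (flip2 b k γ) := by
    refine toggle_none hn hu (Or.inr ⟨?_, ?_⟩)
    · exact flip2_apply_other γ hab (Ne.symm hka)
    · exact flip2_apply_left b k γ
  have hno2 : ¬ upMove j (flip2 p a γ) ∧ ¬ downMove j (flip2 p a γ) := by
    refine toggle_none hn hu (Or.inl ⟨?_, ?_⟩)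
    · exact flip2_apply_right p a γ
    · exact flip2_apply_other γ (Ne.symm hpb) (Ne.symm hab)
  have hdown : downMove j (flip2 b k (flip2 p a γ)) := by
    refine toggle_down hn hu ?_ ?_
    · rw [flip2_apply_other (flip2 p a γ) hab (Ne.symm hka), flip2_apply_right p a γ]
    · rw [flip2_apply_left b k (flip2 p a γ),
        flip2_apply_other γ (Ne.symm hpb) (Ne.symm hab)]
  simp only [poly_cons, poly_nil, flipc]
  rw [Cact_add, Cact_smul, Cact_add, Cact_smul, Cact_add, Cact_smul]
  rw [Cact_sing_up hn hu, Cact_sing_none hno1.1 hno1.2, Cact_sing_none hno2.1 hno2.2,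
    Cact_sing_down hn hdown]
  simp only [smul_zero, add_zero, zero_add, smul_add, sing_smul]
  rw [← ha, ← hb]
  rw [flip_calc1 γ hpa hpb hpk hka hkb hab, flip_calc2 γ hpa hpb hpk hka hkb hab,
    flip2_invol a b γ]
  simp only [one_mul, mul_one, q_mul_qinv]
  abel

/-! ### Lifting a local computation over spectator cups -/

lemma lift_lemma (j : Fin n) (v0 v1 : Bool) (IN OUT : List (Cup n))
    (core : ∀ γ : Seq n, γ (aIdx j) = v0 → γ (bIdx j) = v1 →
      Cact j (poly γ IN) = poly (flip2 (aIdx j) (bIdx j) γ) OUT) :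
    ∀ (Pr : List (Cup n)) (α : Seq n),
      (∀ c ∈ Pr, c.1 ≠ aIdx j ∧ c.1 ≠ bIdx j ∧ c.2.1 ≠ aIdx j ∧ c.2.1 ≠ bIdx j) →
      α (aIdx j) = v0 → α (bIdx j) = v1 →
      Cact j (poly α (Pr ++ IN)) = poly (flip2 (aIdx j) (bIdx j) α) (Pr ++ OUT) := by
  intro Pr
  induction Pr with
  | nil => intro α _ h0 h1; exact core α h0 h1
  | cons c Pr ih =>
      intro α hc h0 h1
      have hc' := hc c List.mem_cons_self
      have hPr : ∀ d ∈ Pr, d.1 ≠ aIdx j ∧ d.1 ≠ bIdx j ∧ d.2.1 ≠ aIdx j ∧ d.2.1 ≠ bIdx j :=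
        fun d hd => hc d (List.mem_cons_of_mem c hd)
      simp only [List.cons_append, poly_cons]
      rw [Cact_add, Cact_smul, ih α hPr h0 h1,
        ih (flipc c α) hPr
          (by rw [flipc, flip2_apply_other α (Ne.symm hc'.1) (Ne.symm hc'.2.2.1)]; exact h0)
          (by rw [flipc, flip2_apply_other α (Ne.symm hc'.2.1) (Ne.symm hc'.2.2.2)]; exact h1)]
      congr 1
      congr 1
      unfold flipc
      rw [flip2_flip2]

/-! ### Valid cup lists -/

def FreeIn (P : List (Cup n)) (p : Fin n) : Prop := ∀ c ∈ P, p ≠ c.1 ∧ p ≠ c.2.1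

structure Valid (α : Seq n) (P : List (Cup n)) : Prop where
  lt : ∀ c ∈ P, c.1.val < c.2.1.val
  val : ∀ c ∈ P, α c.1 = c.2.2 ∧ α c.2.1 = true
  disj : ∀ c ∈ P, ∀ d ∈ P, c ≠ d →
    c.1 ≠ d.1 ∧ c.1 ≠ d.2.1 ∧ c.2.1 ≠ d.1 ∧ c.2.1 ≠ d.2.1
  nodup : P.Nodup

lemma Valid.perm {α : Seq n} {P P' : List (Cup n)} (h : Valid α P) (hp : P.Perm P') :
    Valid α P' := by
  refine ⟨?_, ?_, ?_, h.nodup.perm hp⟩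
  · intro c hc; exact h.lt c (hp.symm.subset hc)
  · intro c hc; exact h.val c (hp.symm.subset hc)
  · intro c hc d hd hcd; exact h.disj c (hp.symm.subset hc) d (hp.symm.subset hd) hcd

/-! ### Helpers for the step lemma -/

lemma flip2_comm' (a b : Fin n) : (flip2 a b : Seq n → Seq n) = flip2 b a :=
  funext (fun v => flip2_comm a b v)

lemma partner {c : Cup n} {x : Fin n} (hx : c.1 = x ∨ c.2.1 = x) (hlt : c.1.val < c.2.1.val) :
    ∃ p : Fin n, p ≠ x ∧ (c.1 = p ∨ c.2.1 = p) ∧ (flipc c : Seq n → Seq n) = flip2 p x := by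
  rcases hx with hx | hx
  · refine ⟨c.2.1, ?_, Or.inr rfl, ?_⟩
    · intro h; rw [h, ← hx] at hlt; omega
    · unfold flipc; rw [hx, flip2_comm']
  · refine ⟨c.1, ?_, Or.inl rfl, ?_⟩
    · intro h; rw [h, ← hx] at hlt; omega
    · unfold flipc; rw [hx]

lemma Valid.append {β : Seq n} {Pr NEW : List (Cup n)} (hV : Valid β Pr) (hN : Valid β NEW)
    (hdisj : ∀ c ∈ Pr, ∀ d ∈ NEW, c.1 ≠ d.1 ∧ c.1 ≠ d.2.1 ∧ c.2.1 ≠ d.1 ∧ c.2.1 ≠ d.2.1) :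
    Valid β (Pr ++ NEW) := by
  refine ⟨?_, ?_, ?_, ?_⟩
  · intro c hc; rcases List.mem_append.mp hc with h | h
    exacts [hV.lt c h, hN.lt c h]
  · intro c hc; rcases List.mem_append.mp hc with h | h
    exacts [hV.val c h, hN.val c h]
  · intro c hc d hd hcd
    rcases List.mem_append.mp hc with h1 | h1 <;> rcases List.mem_append.mp hd with h2 | h2
    · exact hV.disj c h1 d h2 hcd
    · exact hdisj c h1 d h2
    · have := hdisj d h2 c h1; exact ⟨this.1.symm, this.2.2.1.symm, this.2.1.symm, this.2.2.2.symm⟩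
    · exact hN.disj c h1 d h2 hcd
  · refine List.Nodup.append hV.nodup hN.nodup ?_
    intro c hc1 hc2
    exact (hdisj c hc1 c hc2).1 rfl

lemma valid_restrict {α β : Seq n} {P Pr : List (Cup n)} (hV : Valid α P)
    (hsub : ∀ c ∈ Pr, c ∈ P) (hnd : Pr.Nodup)
    (hβ : ∀ c ∈ Pr, β c.1 = α c.1 ∧ β c.2.1 = α c.2.1) : Valid β Pr := by
  refine ⟨fun c hc => hV.lt c (hsub c hc), ?_, fun c hc d hd h => hV.disj c (hsub c hc) d (hsub d hd) h, hnd⟩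
  intro c hc
  rw [(hβ c hc).1, (hβ c hc).2]
  exact hV.val c (hsub c hc)

/-- A generalization of `core2` to arbitrary cups with the prescribed flips. -/
lemma core2' (hn : 2 ≤ n) {j : Fin n} {γ : Seq n} (hu : upMove j γ) {p k : Fin n}
    {c d : Cup n} (e3 e4 : Bool)
    (hc : (flipc c : Seq n → Seq n) = flip2 p (aIdx j))
    (hd : (flipc d : Seq n → Seq n) = flip2 (bIdx j) k)
    (hpa : p ≠ aIdx j) (hpb : p ≠ bIdx j) (hpk : p ≠ k) (hka : k ≠ aIdx j) (hkb : k ≠ bIdx j) :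
    Cact j (poly γ [c, d]) =
      poly (flip2 (aIdx j) (bIdx j) γ) [(aIdx j, bIdx j, e3), (p, k, e4)] := by
  have h1 : poly γ [c, d] = poly γ [(p, aIdx j, true), (bIdx j, k, true)] := by
    simp only [poly_cons, poly_nil, flipc]
    rw [show (flip2 c.1 c.2.1 : Seq n → Seq n) = flip2 p (aIdx j) from hc,
      show (flip2 d.1 d.2.1 : Seq n → Seq n) = flip2 (bIdx j) k from hd]
  rw [h1, core2 hn hu p k true true e3 e4 hpa hpb hpk hka hkb]

/-- Same for `core1`. -/
lemma core1' (hn : 2 ≤ n) {j : Fin n} {γ : Seq n} (hu : upMove j γ) {c : Cup n}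
    (hc : ((c.1 = aIdx j ∨ c.2.1 = aIdx j) ∧ c.1 ≠ bIdx j ∧ c.2.1 ≠ bIdx j) ∨
          ((c.1 = bIdx j ∨ c.2.1 = bIdx j) ∧ c.1 ≠ aIdx j ∧ c.2.1 ≠ aIdx j)) (e : Bool) :
    Cact j (poly γ [c]) = poly (flip2 (aIdx j) (bIdx j) γ) [(aIdx j, bIdx j, e)] :=
  core1 hn hu c hc e

lemma poly_snd_swap (v : Seq n) (x : Cup n) (p k : Fin n) (y y' : Bool) :
    poly v [x, (p, k, y)] = poly v [x, (k, p, y')] := by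
  simp only [poly_cons, poly_nil, flipc]
  rw [flip2_comm' p k]

lemma extract1 {P : List (Cup n)} (hnd : P.Nodup) {c : Cup n} (hc : c ∈ P) :
    ∃ Pr : List (Cup n), P.Perm (Pr ++ [c]) ∧ Pr.Nodup ∧ ∀ e ∈ Pr, e ∈ P ∧ e ≠ c := by
  obtain ⟨s, t, rfl⟩ := List.append_of_mem hc
  refine ⟨s ++ t, List.perm_middle.trans (List.perm_append_singleton c (s ++ t)).symm, ?_, ?_⟩
  · exact (hnd.perm List.perm_middle).of_cons
  · intro e he
    have hnd2 := hnd.perm (List.perm_middle (a := c) (l₁ := s) (l₂ := t))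
    constructor
    · rcases List.mem_append.mp he with h | h
      · exact List.mem_append_left _ h
      · exact List.mem_append_right _ (List.mem_cons_of_mem c h)
    · intro h
      rw [h] at he
      exact (List.nodup_cons.mp hnd2).1 he

lemma extract2 {P : List (Cup n)} (hnd : P.Nodup) {c d : Cup n} (hc : c ∈ P) (hd : d ∈ P)
    (hcd : c ≠ d) :
    ∃ Pr : List (Cup n), P.Perm (Pr ++ [c, d]) ∧ Pr.Nodup ∧
      ∀ e ∈ Pr, e ∈ P ∧ e ≠ c ∧ e ≠ d := by
  obtain ⟨Pr1, hp1, hnd1, hmem1⟩ := extract1 hnd hc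
  have hd1 : d ∈ Pr1 := by
    have h := hp1.subset hd
    rcases List.mem_append.mp h with h | h
    · exact h
    · rw [List.mem_singleton] at h
      exact absurd h.symm hcd
  obtain ⟨Pr, hp2, hnd2, hmem2⟩ := extract1 hnd1 hd1
  refine ⟨Pr, ?_, hnd2, ?_⟩
  · refine hp1.trans ?_
    refine (hp2.append_right [c]).trans ?_
    rw [List.append_assoc]
    exact List.Perm.append_left Pr (List.Perm.swap c d [])
  · intro e he
    obtain ⟨h1, h2⟩ := hmem2 e he
    obtain ⟨h3, h4⟩ := hmem1 e h1
    exact ⟨h3, h4, h2⟩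

/-! ### The step lemma: one Kazhdan–Lusztig generator applied to a cup-diagram sum -/

lemma step_lemma (hn : 2 ≤ n) {j : Fin n} {α : Seq n} {P : List (Cup n)} (hV : Valid α P)
    (hu : upMove j α) :
    ∃ P', Valid (flip2 (aIdx j) (bIdx j) α) P' ∧
      Cact j (poly α P) = poly (flip2 (aIdx j) (bIdx j) α) P' := by
  have hab := aIdx_ne_bIdx hn j
  set a := aIdx j with ha
  set b := bIdx j with hb
  obtain ⟨hva, hvb⟩ := (upMove_iff hn j α).mp hu
  set β := flip2 a b α with hβ
  have hβa : β a = !α a := flip2_apply_left a b α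
  have hβb : β b = !α b := flip2_apply_right a b α
  have hβo : ∀ p : Fin n, p ≠ a → p ≠ b → β p = α p := fun p h1 h2 => flip2_apply_other α h1 h2
  have hupval : ∀ γ : Seq n, γ a = α a → γ b = α b → upMove j γ := by
    intro γ h1 h2; rw [upMove_iff hn]
    exact ⟨by rw [← ha, h1, hva], by rw [← hb, h2, hvb]⟩
  have hnewval : β a = !mark j ∧ β b = true := by
    constructor
    · rw [hβa, hva]
    · rw [hβb, hvb]; rfl
  have haltb : a.val < b.val := by
    have h1 := aIdx_val j; have h2 := bIdx_val hn j
    rw [← ha] at h1; rw [← hb] at h2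
    by_cases h0 : j.val = 0 <;> simp only [h0, if_true, if_false] at h1 h2 <;> omega
  have hnewcup : Valid β [(a, b, !mark j)] := by
    refine ⟨?_, ?_, ?_, List.nodup_singleton _⟩
    · intro e he; rw [List.mem_singleton] at he; rw [he]; exact haltb
    · intro e he; rw [List.mem_singleton] at he; rw [he]; exact hnewval
    · intro e he f hf hef
      rw [List.mem_singleton] at he hf
      exact absurd (he.trans hf.symm) hef
  have mkValid : ∀ Pr : List (Cup n), Pr.Nodup → (∀ e ∈ Pr, e ∈ P) →
      (∀ e ∈ Pr, e.1 ≠ a ∧ e.1 ≠ b ∧ e.2.1 ≠ a ∧ e.2.1 ≠ b) →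
      Valid β (Pr ++ [(a, b, !mark j)]) := by
    intro Pr hnd hsub hends
    refine Valid.append ?_ hnewcup ?_
    · exact valid_restrict hV hsub hnd
        (fun e he => ⟨hβo e.1 (hends e he).1 (hends e he).2.1,
          hβo e.2.1 (hends e he).2.2.1 (hends e he).2.2.2⟩)
    · intro e he f hf
      rw [List.mem_singleton] at hf
      rw [hf]
      exact hends e he
  by_cases hA : ∃ c ∈ P, c.1 = a ∨ c.2.1 = a <;> by_cases hB : ∃ d ∈ P, d.1 = b ∨ d.2.1 = b
  · -- (1) both a and b lie on cups
    obtain ⟨c, hcP, hca⟩ := hA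
    obtain ⟨d, hdP, hdb⟩ := hB
    have hdb1 : d.1 = b := by
      rcases hdb with h | h
      · exact h
      · exfalso; have h2 := (hV.val d hdP).2; rw [h, hvb] at h2; exact Bool.false_ne_true h2
    have hcd : c ≠ d := by
      intro h
      subst h
      rcases hca with h | h
      · exact hab (h.symm.trans hdb1)
      · have hl := hV.lt c hcP; rw [h, hdb1] at hl; omega
    obtain ⟨p, hpa, hpc, hpflip⟩ := partner hca (hV.lt c hcP)
    set k := d.2.1 with hk
    have hkval : α k = true := (hV.val d hdP).2
    have hdflip : (flipc d : Seq n → Seq n) = flip2 b k := by unfold flipc; rw [hdb1]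
    have hbk : b.val < k.val := by have h := hV.lt d hdP; rwa [hdb1] at h
    have hkb : k ≠ b := fun h => by rw [h] at hbk; omega
    have hdisj_cd := hV.disj c hcP d hdP hcd
    have hpb : p ≠ b := by
      rcases hpc with h | h
      · rw [← h, ← hdb1]; exact hdisj_cd.1
      · rw [← h, ← hdb1]; exact hdisj_cd.2.2.1
    have hpk : p ≠ k := by
      rcases hpc with h | h
      · rw [← h, hk]; exact hdisj_cd.2.1
      · rw [← h, hk]; exact hdisj_cd.2.2.2
    have hka : k ≠ a := by
      rcases hca with h | h
      · rw [← h, hk]; exact fun hh => hdisj_cd.2.1 hh.symm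
      · rw [← h, hk]; exact fun hh => hdisj_cd.2.2.2 hh.symm
    have hαp : α p = false → p.val < k.val := by
      intro hp
      have hc1 : c.1 = p := by
        rcases hpc with h | h
        · exact h
        · exfalso; have h2 := (hV.val c hcP).2; rw [h, hp] at h2; exact Bool.false_ne_true h2
      have hc2 : c.2.1 = a := by
        rcases hca with h | h
        · exfalso; rw [hc1] at h; exact hpa h
        · exact h
      have hl := hV.lt c hcP
      rw [hc1, hc2] at hl
      omega
    have hβp : β p = α p := hβo p hpa hpb
    have hβk : β k = α k := hβo k hka hkb
    obtain ⟨Pr, hperm, hndPr, hmemPr⟩ := extract2 hV.nodup hcP hdP hcd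
    have hPrends : ∀ e ∈ Pr, e.1 ≠ a ∧ e.1 ≠ b ∧ e.2.1 ≠ a ∧ e.2.1 ≠ b := by
      intro e he
      obtain ⟨heP, hec, hed⟩ := hmemPr e he
      have hdc := hV.disj e heP c hcP hec
      have hdd := hV.disj e heP d hdP hed
      refine ⟨?_, by rw [← hdb1]; exact hdd.1, ?_, by rw [← hdb1]; exact hdd.2.2.1⟩
      · rcases hca with h | h
        · rw [← h]; exact hdc.1
        · rw [← h]; exact hdc.2.1
      · rcases hca with h | h
        · rw [← h]; exact hdc.2.2.1
        · rw [← h]; exact hdc.2.2.2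
    have hPrpk : ∀ e ∈ Pr, e.1 ≠ p ∧ e.1 ≠ k ∧ e.2.1 ≠ p ∧ e.2.1 ≠ k := by
      intro e he
      obtain ⟨heP, hec, hed⟩ := hmemPr e he
      have hdc := hV.disj e heP c hcP hec
      have hdd := hV.disj e heP d hdP hed
      refine ⟨?_, by rw [hk]; exact hdd.2.1, ?_, by rw [hk]; exact hdd.2.2.2⟩
      · rcases hpc with h | h
        · rw [← h]; exact hdc.1
        · rw [← h]; exact hdc.2.1
      · rcases hpc with h | h
        · rw [← h]; exact hdc.2.2.1
        · rw [← h]; exact hdc.2.2.2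
    have hValidPr : Valid β Pr :=
      valid_restrict hV (fun e he => (hmemPr e he).1) hndPr
        (fun e he => ⟨hβo e.1 (hPrends e he).1 (hPrends e he).2.1,
          hβo e.2.1 (hPrends e he).2.2.1 (hPrends e he).2.2.2⟩)
    -- build the new state, depending on the order of p and k
    have main : ∀ x y : Fin n, ∀ fl : Bool, x.val < y.val → β x = fl ∧ β y = true →
        (flip2 x y : Seq n → Seq n) = flip2 p k →
        (x = p ∧ y = k) ∨ (x = k ∧ y = p) →
        ∃ P', Valid β P' ∧ Cact j (poly α P) = poly β P' := by
      intro x y fl hxy hval hflip hxyor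
      have hxa : x ≠ a := by rcases hxyor with ⟨h, _⟩ | ⟨h, _⟩ <;> rw [h] <;> [exact hpa; exact hka]
      have hxb : x ≠ b := by rcases hxyor with ⟨h, _⟩ | ⟨h, _⟩ <;> rw [h] <;> [exact hpb; exact hkb]
      have hya : y ≠ a := by rcases hxyor with ⟨_, h⟩ | ⟨_, h⟩ <;> rw [h] <;> [exact hka; exact hpa]
      have hyb : y ≠ b := by rcases hxyor with ⟨_, h⟩ | ⟨_, h⟩ <;> rw [h] <;> [exact hkb; exact hpb]
      refine ⟨Pr ++ [(a, b, !mark j), (x, y, fl)], ?_, ?_⟩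
      · refine Valid.append hValidPr ⟨?_, ?_, ?_, ?_⟩ ?_
        · intro e he
          rcases List.mem_cons.mp he with rfl | he
          · exact haltb
          · rw [List.mem_singleton] at he; rw [he]; exact hxy
        · intro e he
          rcases List.mem_cons.mp he with rfl | he
          · exact hnewval
          · rw [List.mem_singleton] at he; rw [he]; exact hval
        · intro e he f hf hef
          rcases List.mem_cons.mp he with rfl | he <;> rcases List.mem_cons.mp hf with rfl | hf
          · exact absurd rfl hef
          · rw [List.mem_singleton] at hf; rw [hf]
            exact ⟨hxa.symm, hya.symm, hxb.symm, hyb.symm⟩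
          · rw [List.mem_singleton] at he; rw [he]
            exact ⟨hxa, hxb, hya, hyb⟩
          · rw [List.mem_singleton] at he hf
            exact absurd (he.trans hf.symm) hef
        · refine List.nodup_cons.mpr ⟨?_, List.nodup_singleton _⟩
          rw [List.mem_singleton]
          intro h
          exact hxa (congrArg Prod.fst h).symm
        · intro e he f hf
          have h5 := hPrpk e he
          have h4 := hPrends e he
          rcases List.mem_cons.mp hf with rfl | hf
          · exact ⟨h4.1, h4.2.1, h4.2.2.1, h4.2.2.2⟩
          · rw [List.mem_singleton] at hf; rw [hf]
            rcases hxyor with ⟨h6, h7⟩ | ⟨h6, h7⟩ <;> rw [h6, h7]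
            · exact ⟨h5.1, h5.2.1, h5.2.2.1, h5.2.2.2⟩
            · exact ⟨h5.2.1, h5.1, h5.2.2.2, h5.2.2.1⟩
      · rw [poly_perm α hperm]
        have hcore : ∀ γ : Seq n, γ a = α a → γ b = α b →
            Cact j (poly γ [c, d]) = poly (flip2 a b γ) [(a, b, !mark j), (x, y, fl)] := by
          intro γ h1 h2
          rw [core2' hn (hupval γ h1 h2) (!mark j) fl hpflip hdflip hpa hpb hpk hka hkb]
          simp only [poly_cons, poly_nil, flipc]
          rw [show (flip2 x y : Seq n → Seq n) = flip2 p k from hflip]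
        exact lift_lemma j (α a) (α b) [c, d] [(a, b, !mark j), (x, y, fl)] hcore Pr α
          hPrends rfl rfl
    by_cases hord : p.val < k.val
    · refine main p k (α p) hord ⟨hβp, by rw [hβk, hkval]⟩ rfl (Or.inl ⟨rfl, rfl⟩)
    · have hαpt : α p = true := by
        rcases hpv : α p with _ | _
        · exact absurd (hαp hpv) hord
        · rfl
      have hkp : k.val < p.val := by
        have : p.val ≠ k.val := fun h => hpk (Fin.ext h)
        omega
      refine main k p true hkp ⟨by rw [hβk, hkval], by rw [hβp, hαpt]⟩
        (flip2_comm' k p) (Or.inr ⟨rfl, rfl⟩)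
  · -- (2) a lies on a cup, b is free
    obtain ⟨c, hcP, hca⟩ := hA
    push_neg at hB
    obtain ⟨p, hpa, hpc, hpflip⟩ := partner hca (hV.lt c hcP)
    obtain ⟨Pr, hperm, hndPr, hmemPr⟩ := extract1 hV.nodup hcP
    have hPrends : ∀ e ∈ Pr, e.1 ≠ a ∧ e.1 ≠ b ∧ e.2.1 ≠ a ∧ e.2.1 ≠ b := by
      intro e he
      obtain ⟨heP, hec⟩ := hmemPr e he
      have hdc := hV.disj e heP c hcP hec
      have hBe := hB e heP
      refine ⟨?_, hBe.1, ?_, hBe.2⟩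
      · rcases hca with h | h
        · rw [← h]; exact hdc.1
        · rw [← h]; exact hdc.2.1
      · rcases hca with h | h
        · rw [← h]; exact hdc.2.2.1
        · rw [← h]; exact hdc.2.2.2
    refine ⟨Pr ++ [(a, b, !mark j)], mkValid Pr hndPr (fun e he => (hmemPr e he).1) hPrends, ?_⟩
    rw [poly_perm α hperm]
    have hcore : ∀ γ : Seq n, γ a = α a → γ b = α b →
        Cact j (poly γ [c]) = poly (flip2 a b γ) [(a, b, !mark j)] := by
      intro γ h1 h2
      refine core1' hn (hupval γ h1 h2) (Or.inl ⟨hca, ?_, ?_⟩) (!mark j)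
      · exact (hB c hcP).1
      · exact (hB c hcP).2
    exact lift_lemma j (α a) (α b) [c] [(a, b, !mark j)] hcore Pr α hPrends rfl rfl
  · -- (3) a is free, b lies on a cup
    obtain ⟨d, hdP, hdb⟩ := hB
    push_neg at hA
    obtain ⟨Pr, hperm, hndPr, hmemPr⟩ := extract1 hV.nodup hdP
    have hPrends : ∀ e ∈ Pr, e.1 ≠ a ∧ e.1 ≠ b ∧ e.2.1 ≠ a ∧ e.2.1 ≠ b := by
      intro e he
      obtain ⟨heP, hed⟩ := hmemPr e he
      have hdd := hV.disj e heP d hdP hed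
      have hAe := hA e heP
      refine ⟨hAe.1, ?_, hAe.2, ?_⟩
      · rcases hdb with h | h
        · rw [← h]; exact hdd.1
        · rw [← h]; exact hdd.2.1
      · rcases hdb with h | h
        · rw [← h]; exact hdd.2.2.1
        · rw [← h]; exact hdd.2.2.2
    refine ⟨Pr ++ [(a, b, !mark j)], mkValid Pr hndPr (fun e he => (hmemPr e he).1) hPrends, ?_⟩
    rw [poly_perm α hperm]
    have hcore : ∀ γ : Seq n, γ a = α a → γ b = α b →
        Cact j (poly γ [d]) = poly (flip2 a b γ) [(a, b, !mark j)] := by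
      intro γ h1 h2
      refine core1' hn (hupval γ h1 h2) (Or.inr ⟨hdb, ?_, ?_⟩) (!mark j)
      · exact (hA d hdP).1
      · exact (hA d hdP).2
    exact lift_lemma j (α a) (α b) [d] [(a, b, !mark j)] hcore Pr α hPrends rfl rfl
  · -- (4) both a and b are free
    push_neg at hA hB
    have hPrends : ∀ e ∈ P, e.1 ≠ a ∧ e.1 ≠ b ∧ e.2.1 ≠ a ∧ e.2.1 ≠ b :=
      fun e he => ⟨(hA e he).1, (hB e he).1, (hA e he).2, (hB e he).2⟩
    refine ⟨P ++ [(a, b, !mark j)], mkValid P hV.nodup (fun e he => he) hPrends, ?_⟩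
    have hcore : ∀ γ : Seq n, γ a = α a → γ b = α b →
        Cact j (poly γ []) = poly (flip2 a b γ) [(a, b, !mark j)] := by
      intro γ h1 h2
      exact core0 hn (hupval γ h1 h2) (!mark j)
    have h := lift_lemma j (α a) (α b) [] [(a, b, !mark j)] hcore P α hPrends rfl rfl
    rwa [List.append_nil] at h

/-! ### Iterating the step lemma along an up-chain -/

lemma chain_lemma (hn : 2 ≤ n) : ∀ (l : List (Fin n)) (α ω : Seq n) (P : List (Cup n)),
    Valid α P → UpChain l α ω →
    ∃ P', Valid ω P' ∧ l.foldl (fun x j => Cact j x) (poly α P) = poly ω P' := by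
  intro l
  induction l with
  | nil =>
      intro α ω P hV hc
      have h : α = ω := hc
      exact ⟨P, h ▸ hV, h ▸ rfl⟩
  | cons j l ih =>
      intro α ω P hV hc
      obtain ⟨hup, hchain⟩ := hc
      obtain ⟨P1, hV1, heq⟩ := step_lemma hn hV hup
      have hs : sAct j α = flip2 (aIdx j) (bIdx j) α := sAct_eq_flip2 hn j α (Or.inl hup)
      rw [← hs] at hV1 heq
      obtain ⟨P', hV', heq'⟩ := ih (sAct j α) ω P1 hV1 hchain
      refine ⟨P', hV', ?_⟩
      show l.foldl (fun x j => Cact j x) (Cact j (poly α P)) = poly ω P'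
      rw [heq, heq']

/-! ### Coefficients of `poly` -/

/-- Coefficients supported in strictly positive degrees. -/
def Ppos (c : L) : Prop := ∀ k : ℤ, k ≤ 0 → c.coeff k = 0
/-- Coefficients supported in non-negative degrees. -/
def Nneg (c : L) : Prop := ∀ k : ℤ, k < 0 → c.coeff k = 0

lemma q_mul_apply (c : L) (k : ℤ) : (q * c).coeff k = c.coeff (k - 1) := by
  unfold q
  unfold LaurentPolynomial.T
  rw [AddMonoidAlgebra.coeff_single_mul_apply, one_mul]
  congr 1
  omega

lemma nneg_one : Nneg (1 : L) := by
  intro k hk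
  rw [AddMonoidAlgebra.one_def, AddMonoidAlgebra.coeff_single, Finsupp.single_apply]
  rw [if_neg (by omega)]

lemma nneg_zero : Nneg (0 : L) := fun k _ => rfl

lemma valid_tail {α : Seq n} {c : Cup n} {P : List (Cup n)} (hV : Valid α (c :: P)) :
    Valid α P :=
  ⟨fun d hd => hV.lt d (List.mem_cons_of_mem c hd),
   fun d hd => hV.val d (List.mem_cons_of_mem c hd),
   fun d hd e he h => hV.disj d (List.mem_cons_of_mem c hd) e (List.mem_cons_of_mem c he) h,
   (List.nodup_cons.mp hV.nodup).2⟩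

lemma poly_nneg : ∀ (P : List (Cup n)) (v : Seq n) (w : Wp n), Nneg ((poly v P) w) := by
  intro P
  induction P with
  | nil =>
      intro v w k hk
      unfold poly sing
      split
      · rw [Finsupp.single_apply]
        split
        · exact nneg_one k hk
        · rfl
      · rfl
  | cons c P ih =>
      intro v w k hk
      rw [poly_cons, Finsupp.add_apply, Finsupp.smul_apply, smul_eq_mul]
      rw [AddMonoidAlgebra.coeff_add, Finsupp.coe_add, Pi.add_apply, q_mul_apply]
      rw [ih v w k hk, ih (flipc c v) w (k - 1) (by omega)]
      rfl

lemma poly_apply_free : ∀ (P : List (Cup n)) (v : Seq n) (w : Wp n),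
    (poly v P) w ≠ 0 → ∀ p : Fin n, (∀ c ∈ P, p ≠ c.1 ∧ p ≠ c.2.1) → w.1 p = v p := by
  intro P
  induction P with
  | nil =>
      intro v w hw p _
      unfold poly sing at hw
      split at hw
      · rw [Finsupp.single_apply] at hw
        split at hw
        · next h => rw [← h]
        · exact absurd rfl hw
      · exact absurd rfl hw
  | cons c P ih =>
      intro v w hw p hp
      have hpP : ∀ d ∈ P, p ≠ d.1 ∧ p ≠ d.2.1 := fun d hd => hp d (List.mem_cons_of_mem c hd)
      have hpc := hp c List.mem_cons_self
      rw [poly_cons, Finsupp.add_apply, Finsupp.smul_apply, smul_eq_mul] at hw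
      by_cases h1 : (poly v P) w = 0
      · rw [h1, zero_add] at hw
        have h2 : (poly (flipc c v) P) w ≠ 0 := by
          intro h; rw [h, mul_zero] at hw; exact hw rfl
        rw [ih (flipc c v) w h2 p hpP]
        exact flip2_apply_other v hpc.1 hpc.2
      · exact ih v w h1 p hpP

lemma poly_top : ∀ (P : List (Cup n)) (α : Seq n) (hE : EvenMinus α), Valid α P →
    (poly α P) ⟨α, hE⟩ = 1 := by
  intro P
  induction P with
  | nil =>
      intro α hE _
      unfold poly sing
      rw [dif_pos hE, Finsupp.single_apply, if_pos rfl]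
  | cons c P ih =>
      intro α hE hV
      rw [poly_cons, Finsupp.add_apply, Finsupp.smul_apply, smul_eq_mul]
      rw [ih α hE (valid_tail hV)]
      have hfree : ∀ d ∈ P, c.1 ≠ d.1 ∧ c.1 ≠ d.2.1 := by
        intro d hd
        have hcd : c ≠ d := by
          intro h
          exact (List.nodup_cons.mp hV.nodup).1 (h ▸ hd)
        have h := hV.disj c List.mem_cons_self d (List.mem_cons_of_mem c hd) hcd
        exact ⟨h.1, h.2.1⟩
      have hz : (poly (flipc c α) P) ⟨α, hE⟩ = 0 := by
        by_contra h
        have h2 := poly_apply_free P (flipc c α) ⟨α, hE⟩ h c.1 hfree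
        rw [show (flipc c α) c.1 = !α c.1 from flip2_apply_left c.1 c.2.1 α] at h2
        simp at h2
      rw [hz, mul_zero, add_zero]

lemma poly_off : ∀ (P : List (Cup n)) (α : Seq n) (hE : EvenMinus α) (w : Wp n),
    Valid α P → w ≠ ⟨α, hE⟩ → Ppos ((poly α P) w) := by
  intro P
  induction P with
  | nil =>
      intro α hE w _ hw k hk
      unfold poly sing
      rw [dif_pos hE, Finsupp.single_apply, if_neg (fun h => hw h.symm)]
      rfl
  | cons c P ih =>
      intro α hE w hV hw k hk
      rw [poly_cons, Finsupp.add_apply, Finsupp.smul_apply, smul_eq_mul]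
      rw [AddMonoidAlgebra.coeff_add, Finsupp.coe_add, Pi.add_apply, q_mul_apply]
      rw [ih α hE w (valid_tail hV) hw k hk, poly_nneg P (flipc c α) w (k - 1) (by omega)]
      rfl

/-! ### The length statistic and downward moves -/

def ell (α : Seq n) : ℕ := ∑ i : Fin n, (if α i then i.val else 0)

lemma ell_split {a b : Fin n} (hab : a ≠ b) (w : Seq n) :
    ell w = (if w a then a.val else 0) + (if w b then b.val else 0)
      + ∑ i ∈ (Finset.univ.erase a).erase b, (if w i then i.val else 0) := by
  unfold ell
  rw [← Finset.add_sum_erase Finset.univ _ (Finset.mem_univ a),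
    ← Finset.add_sum_erase (Finset.univ.erase a) _
      (Finset.mem_erase.mpr ⟨hab.symm, Finset.mem_univ b⟩)]
  ring

lemma ell_flip2_up (hn : 2 ≤ n) {j : Fin n} {v : Seq n} (hu : upMove j v) :
    ell (flip2 (aIdx j) (bIdx j) v) = ell v + 1 := by
  have hab := aIdx_ne_bIdx hn j
  obtain ⟨h1, h2⟩ := (upMove_iff hn j v).mp hu
  rw [ell_split hab (flip2 (aIdx j) (bIdx j) v), ell_split hab v]
  have hrest : ∑ i ∈ (Finset.univ.erase (aIdx j)).erase (bIdx j),
      (if flip2 (aIdx j) (bIdx j) v i then i.val else 0)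
      = ∑ i ∈ (Finset.univ.erase (aIdx j)).erase (bIdx j), (if v i then i.val else 0) := by
    apply Finset.sum_congr rfl
    intro i hi
    rw [Finset.mem_erase, Finset.mem_erase] at hi
    rw [flip2_apply_other v hi.2.1 hi.1]
  rw [hrest, flip2_apply_left, flip2_apply_right, h1, h2]
  have hav := aIdx_val j
  have hbv := bIdx_val hn j
  by_cases h0 : j.val = 0
  · simp only [h0, if_true] at hav hbv
    unfold mark
    simp only [h0, decide_not]
    norm_num
    omega
  · simp only [h0, if_false] at hav hbv
    unfold mark
    have hj : 0 < j.val := Nat.pos_of_ne_zero h0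
    simp only [h0, decide_not]
    norm_num
    omega

lemma up_of_down (hn : 2 ≤ n) {j : Fin n} {v : Seq n} (hd : downMove j v) :
    upMove j (flip2 (aIdx j) (bIdx j) v) := by
  obtain ⟨h1, h2⟩ := (downMove_iff hn j v).mp hd
  rw [upMove_iff hn, flip2_apply_left, flip2_apply_right, h1, h2]
  exact ⟨Bool.not_not _, rfl⟩

lemma ell_flip2_down (hn : 2 ≤ n) {j : Fin n} {v : Seq n} (hd : downMove j v) :
    ell v = ell (flip2 (aIdx j) (bIdx j) v) + 1 := by
  have h := ell_flip2_up hn (up_of_down hn hd)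
  rwa [flip2_invol] at h

lemma exists_down (hn : 2 ≤ n) {α : Seq n} (hE : EvenMinus α)
    (hne : α ≠ (fun _ => false)) : ∃ j : Fin n, downMove j α := by
  have hS : (Finset.univ.filter (fun i => α i = true)).Nonempty := by
    rw [Finset.filter_nonempty_iff]
    by_contra h
    push_neg at h
    apply hne
    funext i
    have := h i (Finset.mem_univ i)
    simpa using this
  obtain ⟨i0, hi0mem, hi0min⟩ := Finset.exists_min_image _ (fun i : Fin n => i.val) hS
  rw [Finset.mem_filter] at hi0mem
  have hαi0 : α i0 = true := hi0mem.2
  by_cases h0 : i0.val = 0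
  · -- the least minus is at position 0; find the next one
    have hcard : 2 ≤ (Finset.univ.filter (fun i => α i = true)).card := by
      have he := (evenMinus_iff α).mp hE
      unfold mc at he
      have hpos : 0 < (Finset.univ.filter (fun i => α i = true)).card :=
        Finset.card_pos.mpr hS
      rcases he with ⟨m, hm⟩
      omega
    have hS2 : ((Finset.univ.filter (fun i => α i = true)).erase i0).Nonempty := by
      rw [← Finset.card_pos, Finset.card_erase_of_mem (Finset.mem_filter.mpr hi0mem)]
      omega
    obtain ⟨i1, hi1mem, hi1min⟩ := Finset.exists_min_image _ (fun i : Fin n => i.val) hS2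
    rw [Finset.mem_erase, Finset.mem_filter] at hi1mem
    have hαi1 : α i1 = true := hi1mem.2.2
    have hi1pos : 0 < i1.val := by
      rcases Nat.eq_zero_or_pos i1.val with h | h
      · exfalso; exact hi1mem.1 (Fin.ext (h.trans h0.symm))
      · exact h
    by_cases h1 : i1.val = 1
    · -- down move at 0
      refine ⟨⟨0, i0.pos⟩, ?_⟩
      unfold downMove
      rw [if_pos rfl]
      constructor
      · rw [show (⟨0, (⟨0, i0.pos⟩ : Fin n).pos⟩ : Fin n) = i0 from Fin.ext h0.symm]
        exact hαi0
      · rw [show idx1 (⟨0, i0.pos⟩ : Fin n) = i1 from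
          Fin.ext (by unfold idx1; simp [Nat.mod_eq_of_lt (by omega : 1 < n), h1])]
        exact hαi1
    · -- down move at i1
      refine ⟨i1, ?_⟩
      unfold downMove
      rw [if_neg (by omega)]
      refine ⟨?_, hαi1⟩
      rcases hprev : α ⟨i1.val - 1, by have := i1.isLt; omega⟩ with _ | _
      · rfl
      · exfalso
        have hmem : (⟨i1.val - 1, by have := i1.isLt; omega⟩ : Fin n)
            ∈ (Finset.univ.filter (fun i => α i = true)).erase i0 := by
          rw [Finset.mem_erase, Finset.mem_filter]
          refine ⟨?_, Finset.mem_univ _, hprev⟩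
          intro h
          have := congrArg Fin.val h
          simp at this
          omega
        have := hi1min _ hmem
        simp at this
        omega
  · -- the least minus is at position ≥ 1 : down move at i0
    refine ⟨i0, ?_⟩
    unfold downMove
    rw [if_neg (by omega)]
    refine ⟨?_, hαi0⟩
    rcases hprev : α ⟨i0.val - 1, by have := i0.isLt; omega⟩ with _ | _
    · rfl
    · exfalso
      have hmem : (⟨i0.val - 1, by have := i0.isLt; omega⟩ : Fin n)
          ∈ Finset.univ.filter (fun i => α i = true) :=
        Finset.mem_filter.mpr ⟨Finset.mem_univ _, hprev⟩
      have := hi0min _ hmem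
      simp at this
      omega

/-! ### Bar involution generalities -/

lemma invert_q : LaurentPolynomial.invert q = qinv := by
  unfold q qinv
  simp

lemma Cact_support {j : Fin n} {y : NMod n} {u : Wp n} (hu : u ∈ (Cact j y).support) :
    ∃ v ∈ y.support, u = v ∨ ((upMove j v.1 ∨ downMove j v.1) ∧ u.1 = sAct j v.1) := by
  unfold Cact at hu
  have h := Finsupp.support_sum hu
  rw [Finset.mem_biUnion] at h
  obtain ⟨v, hv, hu2⟩ := h
  refine ⟨v, hv, ?_⟩
  by_cases h1 : upMove j v.1
  · rw [if_pos h1] at hu2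
    by_cases h2 : EvenMinus (sAct j v.1)
    · rw [dif_pos h2] at hu2
      have h3 := Finsupp.support_smul hu2
      have h4 := Finsupp.support_add h3
      rw [Finset.mem_union] at h4
      rcases h4 with h4 | h4
      · have := Finsupp.support_single_subset h4
        rw [Finset.mem_singleton] at this
        right
        exact ⟨Or.inl h1, by rw [this]⟩
      · have := Finsupp.support_single_subset h4
        rw [Finset.mem_singleton] at this
        left; exact this
    · rw [dif_neg h2] at hu2
      simp at hu2
  · rw [if_neg h1] at hu2
    by_cases h1' : downMove j v.1
    · rw [if_pos h1'] at hu2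
      by_cases h2 : EvenMinus (sAct j v.1)
      · rw [dif_pos h2] at hu2
        have h3 := Finsupp.support_smul hu2
        have h4 := Finsupp.support_add h3
        rw [Finset.mem_union] at h4
        rcases h4 with h4 | h4
        · have := Finsupp.support_single_subset h4
          rw [Finset.mem_singleton] at this
          right
          exact ⟨Or.inr h1', by rw [this]⟩
        · have := Finsupp.support_single_subset h4
          rw [Finset.mem_singleton] at this
          left; exact this
      · rw [dif_neg h2] at hu2
        simp at hu2
    · rw [if_neg h1'] at hu2
      simp at hu2

section BarSection

variable (bar : NMod n → NMod n)

lemma bar_zero (hbar_add : ∀ x y : NMod n, bar (x + y) = bar x + bar y) : bar 0 = 0 := by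
  have h := hbar_add 0 0
  rw [add_zero] at h
  exact (add_eq_right.mp h.symm)

lemma bar_sub (hbar_add : ∀ x y : NMod n, bar (x + y) = bar x + bar y) (x y : NMod n) :
    bar (x - y) = bar x - bar y := by
  have h := hbar_add (x - y) y
  rw [sub_add_cancel] at h
  rw [eq_sub_iff_add_eq]
  exact h.symm

lemma bar_finsum {ι : Type*} (hbar_add : ∀ x y : NMod n, bar (x + y) = bar x + bar y)
    (s : Finset ι) (f : ι → NMod n) : bar (∑ i ∈ s, f i) = ∑ i ∈ s, bar (f i) := by
  classical
  induction s using Finset.induction_on with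
  | empty => simpa using bar_zero bar hbar_add
  | insert _ _ hnotmem ih =>
      rw [Finset.sum_insert hnotmem, Finset.sum_insert hnotmem, hbar_add, ih]

lemma bar_tri (hn : 2 ≤ n)
    (hbar_add : ∀ x y : NMod n, bar (x + y) = bar x + bar y)
    (hbar_smul : ∀ (r : L) (x : NMod n), bar (r • x) = (LaurentPolynomial.invert r) • bar x)
    (hbar_e : bar (Finsupp.single (eW n) 1) = Finsupp.single (eW n) 1)
    (hbar_C : ∀ (j : Fin n) (x : NMod n), bar (Cact j x) = Cact j (bar x)) :
    ∀ u : Wp n, ∃ z : NMod n, bar (Finsupp.single u 1) = Finsupp.single u 1 + z ∧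
      ∀ v ∈ z.support, ell v.1 < ell u.1 := by
  have H : ∀ m : ℕ, ∀ u : Wp n, ell u.1 = m →
      ∃ z : NMod n, bar (Finsupp.single u 1) = Finsupp.single u 1 + z ∧
        ∀ v ∈ z.support, ell v.1 < ell u.1 := by
    intro m
    induction m using Nat.strong_induction_on with
    | _ m ih =>
        intro u hm
        by_cases hne : u.1 = (fun _ => false)
        · have hue : u = eW n := Subtype.ext hne
          refine ⟨0, ?_, by simp⟩
          rw [hue, hbar_e, add_zero]
        · obtain ⟨j, hd⟩ := exists_down hn u.2 hne
          have hab := aIdx_ne_bIdx hn j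
          set α' := flip2 (aIdx j) (bIdx j) u.1 with hα'
          have hup : upMove j α' := up_of_down hn hd
          have he' : EvenMinus α' := (mc_flip2 hab u.1).mpr u.2
          set u' : Wp n := ⟨α', he'⟩ with hu'
          have hsact : sAct j u.1 = α' := sAct_eq_flip2 hn j u.1 (Or.inr hd)
          have hsact' : sAct j α' = u.1 := by
            rw [sAct_eq_flip2 hn j α' (Or.inl hup), hα', flip2_invol]
          have hell : ell u.1 = ell α' + 1 := by
            have h := ell_flip2_down hn hd
            rwa [← hα'] at h
          have hC : Cact j (Finsupp.single u' 1)
              = Finsupp.single u 1 + Finsupp.single u' q := by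
            rw [Cact_single]
            rw [if_pos (show upMove j u'.1 from hup)]
            have he2 : EvenMinus (sAct j u'.1) := by
              show EvenMinus (sAct j α')
              rw [hsact']; exact u.2
            rw [dif_pos he2, one_smul]
            congr 2
            exact Subtype.ext hsact'
          obtain ⟨z', hz', hz'supp⟩ := ih (ell α') (by omega) u' rfl
          have hsingle : Finsupp.single u (1 : L)
              = Cact j (Finsupp.single u' 1) - Finsupp.single u' q := by
            rw [hC]; abel
          refine ⟨Finsupp.single u' q + Cact j z' - qinv • Finsupp.single u' 1 - qinv • z',
            ?_, ?_⟩
          · rw [hsingle, bar_sub bar hbar_add, hbar_C,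
              show Finsupp.single u' q = q • Finsupp.single u' (1 : L) by
                rw [Finsupp.smul_single, smul_eq_mul, mul_one],
              hbar_smul, invert_q, hz', Cact_add, hC, smul_add]
            abel
          · intro v hv
            have h1 := Finsupp.support_sub (f := Finsupp.single u' q + Cact j z'
              - qinv • Finsupp.single u' (1 : L)) (g := qinv • z') hv
            rw [Finset.mem_union] at h1
            rcases h1 with h1 | h1
            · have h2 := Finsupp.support_sub (f := Finsupp.single u' q + Cact j z')
                (g := qinv • Finsupp.single u' (1 : L)) h1
              rw [Finset.mem_union] at h2
              rcases h2 with h2 | h2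
              · have h3 := Finsupp.support_add h2
                rw [Finset.mem_union] at h3
                rcases h3 with h3 | h3
                · have h4 := Finsupp.support_single_subset h3
                  rw [Finset.mem_singleton] at h4
                  rw [h4]
                  show ell α' < ell u.1
                  omega
                · obtain ⟨v', hv', hcase⟩ := Cact_support h3
                  have h5 : ell v'.1 < ell α' := hz'supp v' hv'
                  rcases hcase with rfl | ⟨hmove, heq⟩
                  · omega
                  · rcases hmove with hm1 | hm1
                    · have := ell_flip2_up hn hm1
                      rw [← sAct_eq_flip2 hn j v'.1 (Or.inl hm1), ← heq] at this
                      omega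
                    · have := ell_flip2_down hn hm1
                      rw [← sAct_eq_flip2 hn j v'.1 (Or.inr hm1), ← heq] at this
                      omega
              · have h3 := Finsupp.support_smul h2
                have h4 := Finsupp.support_single_subset h3
                rw [Finset.mem_singleton] at h4
                rw [h4]
                show ell α' < ell u.1
                omega
            · have h2 := Finsupp.support_smul h1
              have h3 : ell v.1 < ell α' := hz'supp v h2
              omega
  intro u
  exact H (ell u.1) u rfl

lemma uniq_zero (hbar_add : ∀ x y : NMod n, bar (x + y) = bar x + bar y)
    (hbar_smul : ∀ (r : L) (x : NMod n), bar (r • x) = (LaurentPolynomial.invert r) • bar x)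
    (htri : ∀ u : Wp n, ∃ z : NMod n, bar (Finsupp.single u 1) = Finsupp.single u 1 + z ∧
      ∀ v ∈ z.support, ell v.1 < ell u.1)
    (y : NMod n) (hbary : bar y = y) (hpos : ∀ v : Wp n, Ppos (y v)) : y = 0 := by
  by_contra hy
  obtain ⟨v, hvmem, hvmax⟩ := Finset.exists_max_image y.support (fun u => ell u.1)
    (Finsupp.support_nonempty_iff.mpr hy)
  choose z hz hzsupp using htri
  have hyv : y v = LaurentPolynomial.invert (y v) := by
    have hexp : bar y = ∑ u ∈ y.support,
        (LaurentPolynomial.invert (y u)) • (Finsupp.single u 1 + z u) := by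
      conv_lhs => rw [← Finsupp.sum_single y]
      rw [Finsupp.sum]
      rw [bar_finsum bar hbar_add]
      apply Finset.sum_congr rfl
      intro u _
      rw [show Finsupp.single u (y u) = (y u) • Finsupp.single u (1 : L) by
        rw [Finsupp.smul_single, smul_eq_mul, mul_one], hbar_smul, hz]
    have happ : (bar y) v = LaurentPolynomial.invert (y v) := by
      rw [hexp, Finsupp.finset_sum_apply]
      rw [Finset.sum_eq_single_of_mem v hvmem]
      · rw [Finsupp.smul_apply, Finsupp.add_apply, Finsupp.single_eq_same]
        have hzv : (z v) v = 0 := by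
          by_contra h
          have := hzsupp v v (Finsupp.mem_support_iff.mpr h)
          omega
        rw [hzv, add_zero, smul_eq_mul, mul_one]
      · intro u hu hne
        rw [Finsupp.smul_apply, Finsupp.add_apply]
        rw [Finsupp.single_eq_of_ne' hne]
        have hzv : (z u) v = 0 := by
          by_contra h
          have h1 := hzsupp u v (Finsupp.mem_support_iff.mpr h)
          have h2 := hvmax u hu
          omega
        rw [hzv, add_zero, smul_zero]
    rw [← happ, hbary]
  have hyv0 : y v ≠ 0 := Finsupp.mem_support_iff.mp hvmem
  obtain ⟨k, hk⟩ := Finsupp.support_nonempty_iff.mpr (show (y v).coeff ≠ 0 by rwa [Ne, AddMonoidAlgebra.coeff_eq_zero])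
  have hk1 : (y v).coeff k ≠ 0 := Finsupp.mem_support_iff.mp hk
  have hkpos : 0 < k := by
    by_contra h
    exact hk1 (hpos v k (by omega))
  apply hk1
  rw [hyv]
  rw [LaurentPolynomial.invert_apply]
  exact hpos v (-k) (by omega)

end BarSection

/-- Every element `w` of `W^p` (type `D_n` modulo the type `A_{n-1}`
parabolic) is Deodhar: for any reduced expression `w = s_{i_1} ⋯ s_{i_k}`, the parabolic
Kazhdan–Lusztig basis element satisfies `N̄_w = N̄_e C_{s_{i_1}} ⋯ C_{s_{i_k}}`
(where `C_s = H_s + q`, and `N̄_e = N_e`). -/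
theorem statement_8 (n : ℕ) (hn : 4 ≤ n)
    (bar : NMod n → NMod n)
    (hbar_add : ∀ x y, bar (x + y) = bar x + bar y)
    (hbar_smul : ∀ (r : L) x, bar (r • x) = (LaurentPolynomial.invert r) • bar x)
    (hbar_invol : ∀ x, bar (bar x) = x)
    (hbar_e : bar (Finsupp.single (eW n) 1) = Finsupp.single (eW n) 1)
    (hbar_C : ∀ j x, bar (Cact j x) = Cact j (bar x))
    (Nb : Wp n → NMod n)
    (hNb_bar : ∀ w, bar (Nb w) = Nb w)
    (hNb_diag : ∀ w, (Nb w) w = 1)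
    (hNb_tri : ∀ w v, v ≠ w → ∀ k : ℤ, k ≤ 0 → ((Nb w) v).coeff k = 0)
    (hNb_e : Nb (eW n) = Finsupp.single (eW n) 1)
    (w : Wp n) (l : List (Fin n)) (hl : UpChain l (eW n).1 w.1) :
    Nb w = l.foldl (fun x j => Cact j x) (Finsupp.single (eW n) (1 : L)) := by
  have hn2 : 2 ≤ n := by omega
  have hVe : Valid (eW n).1 ([] : List (Cup n)) := by
    refine ⟨?_, ?_, ?_, List.nodup_nil⟩ <;> intro c hc <;> exact absurd hc List.not_mem_nil
  have hbase : poly (eW n).1 ([] : List (Cup n)) = Finsupp.single (eW n) 1 := by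
    unfold poly sing
    rw [dif_pos (eW n).2]
  obtain ⟨P', hV', heq⟩ := chain_lemma hn2 l (eW n).1 w.1 [] hVe hl
  rw [hbase] at heq
  have hbarfold : ∀ (l' : List (Fin n)) (z : NMod n), bar z = z →
      bar (l'.foldl (fun x j => Cact j x) z) = l'.foldl (fun x j => Cact j x) z := by
    intro l'
    induction l' with
    | nil => intro z hz; exact hz
    | cons j l' ih =>
        intro z hz
        show bar (l'.foldl (fun x j => Cact j x) (Cact j z)) = _
        exact ih (Cact j z) (by rw [hbar_C, hz])
  have hbarx : bar (poly w.1 P') = poly w.1 P' := by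
    rw [← heq]
    exact hbarfold l _ hbar_e
  have hbary : bar (poly w.1 P' - Nb w) = poly w.1 P' - Nb w := by
    rw [bar_sub bar hbar_add, hbarx, hNb_bar]
  have hpos : ∀ v : Wp n, Ppos ((poly w.1 P' - Nb w) v) := by
    intro v k hk
    rw [Finsupp.sub_apply]
    by_cases hv : v = w
    · rw [hv]
      have h1 : (poly w.1 P') w = 1 := poly_top P' w.1 w.2 hV'
      rw [h1, hNb_diag w, sub_self]
      rfl
    · rw [show ((poly w.1 P') v - (Nb w) v).coeff k
          = ((poly w.1 P') v).coeff k - ((Nb w) v).coeff k by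
          rw [AddMonoidAlgebra.coeff_sub, Finsupp.sub_apply]]
      rw [poly_off P' w.1 w.2 v hV' hv k hk, hNb_tri w v hv k hk, sub_self]
  have hy := uniq_zero bar hbar_add hbar_smul
    (bar_tri bar hn2 hbar_add hbar_smul hbar_e hbar_C)
    (poly w.1 P' - Nb w) hbary hpos
  rw [heq]
  exact (sub_eq_zero.mp hy).symm

end TypeD
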